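/- Let K be a finite extension of the finite field k. Then there exists a primitive element x of K over k (i.e., k(x) = K) with N_{K/k}(x) = 1. -/

import Mathlib

open Module

/-- Let `K` be a finite extension of a finite field `k`. Then there is a
primitive element `x` of `K/k` with norm `1`. -/
theorem stmt7 {k K : Type*} [Field k] [Finite k] [Field K] [Algebra k K]
    [FiniteDimensional k K] :
    ∃ x : K, IntermediateField.adjoin k {x} = ⊤ ∧ Algebra.norm k x = 1 := by
  have : Finite K := Module.finite_of_finite k
  cases nonempty_fintype k
  cases nonempty_fintype K
  classical
  set q := Fintype.card k with hq
  set n := finrank k K with hn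
  have hq2 : 2 ≤ q := Fintype.one_lt_card
  -- the norm as a monoid hom on units
  set f : Kˣ →* kˣ := Units.map (Algebra.norm k : K →* k) with hf
  obtain ⟨g, hg⟩ := IsCyclic.exists_generator (α := f.ker)
  set x : K := ((g : Kˣ) : K) with hx
  have hx0 : x ≠ 0 := (g : Kˣ).ne_zero
  -- norm of x is 1
  have hnorm : Algebra.norm k x = 1 := by
    have h1 : f (g : Kˣ) = 1 := g.2
    simpa [hf, hx] using congrArg Units.val h1
  refine ⟨x, ?_, hnorm⟩
  -- cardinality of the kernel
  have hker : Nat.card f.ker * Nat.card (Kˣ ⧸ f.ker) = q ^ n - 1 := by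
    rw [mul_comm, ← Subgroup.card_eq_card_quotient_mul_card_subgroup]
    rw [Nat.card_eq_fintype_card, Fintype.card_units, ← card_eq_pow_finrank (K := k) (V := K)]
  have hquot : Nat.card (Kˣ ⧸ f.ker) ∣ q - 1 := by
    have e := QuotientGroup.quotientKerEquivRange f
    rw [Nat.card_congr e.toEquiv]
    have := Subgroup.card_subgroup_dvd_card f.range
    simpa [Nat.card_eq_fintype_card, Fintype.card_units, hq] using this
  -- order of x
  have horder : orderOf x = Nat.card f.ker := by
    rw [hx, orderOf_units, Subgroup.orderOf_coe g, orderOf_eq_card_of_forall_mem_zpowers hg,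
      Nat.card_eq_fintype_card]
  -- the subfield generated by x
  set F := IntermediateField.adjoin k {x} with hF
  have hxF : x ∈ F := IntermediateField.mem_adjoin_simple_self k x
  set m := finrank k F with hm
  have hmn : m ≤ n := by
    rw [hm, hn, ← IntermediateField.finrank_eq_finrank_subalgebra]
    exact Submodule.finrank_le F.toSubalgebra.toSubmodule
  -- order of x divides q^m - 1
  have hdvd : orderOf x ∣ q ^ m - 1 := by
    have hdec : DecidableEq F := Classical.decEq F
    have hcardF : Fintype.card F = q ^ m := card_eq_pow_finrank
    have hx0' : (⟨x, hxF⟩ : F) ≠ 0 := by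
      intro h
      exact hx0 (congrArg Subtype.val h)
    have hpow : (⟨x, hxF⟩ : F) ^ (Fintype.card F - 1) = 1 :=
      FiniteField.pow_card_sub_one_eq_one _ hx0'
    have : orderOf (⟨x, hxF⟩ : F) ∣ q ^ m - 1 := by
      rw [← hcardF]; exact orderOf_dvd_of_pow_eq_one hpow
    rwa [← orderOf_injective (algebraMap F K).toMonoidHom (algebraMap F K).injective] at this
  -- conclude m = n
  have hnm : n ≤ m := by
    by_contra hlt
    push_neg at hlt
    have hm1 : m ≤ n - 1 := by omega
    obtain ⟨t, ht⟩ := hquot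
    have ht0 : 0 < Nat.card (Kˣ ⧸ f.ker) := Nat.card_pos
    have hord_le : orderOf x ≤ q ^ m - 1 :=
      Nat.le_of_dvd (by
        have hm0 : 0 < m := Module.finrank_pos
        have := Nat.one_lt_pow (n := m) (by omega) hq2
        omega) hdvd
    have hquot_le : Nat.card (Kˣ ⧸ f.ker) ≤ q - 1 :=
      Nat.le_of_dvd (by omega) ⟨t, ht⟩
    have hpow_le : q ^ m ≤ q ^ (n - 1) := Nat.pow_le_pow_right (by omega) hm1
    have hm0 : 0 < q ^ m := Nat.pow_pos (by omega)
    have hker_le : Nat.card f.ker ≤ q ^ (n - 1) - 1 := by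
      rw [← horder]; omega
    set a := q ^ (n - 1) with haa
    have ha1 : 1 ≤ a := Nat.one_le_pow _ _ (by omega)
    have hqn : q ^ n = a * q := by
      rw [haa, ← pow_succ]
      congr 1
      omega
    have hk1 : 1 ≤ q ^ n := Nat.one_le_pow _ _ (by omega)
    have hle2 : q ^ n - 1 ≤ (a - 1) * (q - 1) := by
      calc q ^ n - 1 = Nat.card f.ker * Nat.card (Kˣ ⧸ f.ker) := hker.symm
        _ ≤ (a - 1) * (q - 1) := Nat.mul_le_mul hker_le hquot_le
    have hlt2 : (a - 1) * (q - 1) < q ^ n - 1 := by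
      have h2 : (q : ℤ) ^ n = (a : ℤ) * q := by exact_mod_cast hqn
      zify [ha1, (by omega : 1 ≤ q), hk1]
      nlinarith [h2, (by exact_mod_cast ha1 : (1 : ℤ) ≤ a), (by exact_mod_cast hq2 : (2 : ℤ) ≤ q)]
    omega
  have : F = ⊤ := by
    apply IntermediateField.eq_of_le_of_finrank_le le_top
    rw [IntermediateField.finrank_top']; omega
  exact this
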